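/- arXiv:1107.1063 — 2 statements merged into one kernel-verified Lean document; each statement's English description precedes it below -/
import Mathlib

section
/- For all integers n and r with 0 ≤ r ≤ n−1, the number of arrangements in B⁺(n,r) of odd weight equals the number of arrangements in B⁻(n,r) of even weight plus (−1)^{r+1}; that is, |B⁺(n,r) ∩ {odd weight}| = |B⁻(n,r) ∩ {even weight}| + (−1)^{r+1} as integers. -/
open Finset

/-- A letter for arrangements: white, black, or decorated. -/
inductive Letter : Type
  | white : Letter
  | black : Letter
  | decorated : Letter
  deriving DecidableEq

/-- `B n r`: words of length `n` over `Letter` with exactly `r` black letters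
whose last letter is not black. -/
def B (n r : ℕ) : Set (List Letter) :=
  {w | w.length = n ∧ w.count Letter.black = r ∧ w.getLast? ≠ some Letter.black}

/-- `B⁺ n r`: members of `B n r` containing a decorated letter strictly to the
right of the last black letter. -/
def Bplus (n r : ℕ) : Set (List Letter) :=
  {w | w ∈ B n r ∧ ∃ a b : List Letter, w = a ++ Letter.decorated :: b ∧ Letter.black ∉ b}

/-- The weight of an arrangement: the length of the maximal run of black letters
immediately preceding the last position. -/
def weight (w : List Letter) : ℕ :=
  (w.dropLast.reverse.takeWhile (· = Letter.black)).length

/-- `B⁻ n r`: members of `B n r` not in `B⁺ n r`. -/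
def Bminus (n r : ℕ) : Set (List Letter) := B n r \ Bplus n r

instance : Fintype Letter :=
  ⟨{Letter.white, Letter.black, Letter.decorated}, by intro x; cases x <;> simp⟩

def dA (w : List Letter) : Prop :=
  ∃ a b : List Letter, w = a ++ Letter.decorated :: b ∧ Letter.black ∉ b

lemma weight_le_count (w : List Letter) : weight w ≤ w.count Letter.black := by
  have hpre := List.takeWhile_prefix (l := w.dropLast.reverse) (· = Letter.black)
  have h0 := hpre.count_le Letter.black
  have hall : (w.dropLast.reverse.takeWhile (· = Letter.black)).count Letter.black
      = (w.dropLast.reverse.takeWhile (· = Letter.black)).length := by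
    rw [List.count_eq_length]
    intro b hb
    have := List.mem_takeWhile_imp hb
    simp only [decide_eq_true_eq] at this
    exact this.symm
  have h1 : weight w ≤ (w.dropLast.reverse).count Letter.black := by
    unfold weight; omega
  rw [List.count_reverse] at h1
  have h2 := (List.dropLast_sublist w).count_le Letter.black
  omega

lemma weight_cons (y : Letter) {w : List Letter} (hw : w ≠ [])
    (hy : y ≠ Letter.black ∨ w.count Letter.black + 1 < w.length) :
    weight (y :: w) = weight w := by
  unfold weight
  rw [List.dropLast_cons_of_ne_nil hw, List.reverse_cons, List.takeWhile_append]
  split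
  case isTrue h =>
    rcases hy with hy | hy
    · have hy' : List.takeWhile (· = Letter.black) [y] = [] := by
        simp [List.takeWhile_cons, hy]
      rw [hy', List.length_append, h]
      simp
    · exfalso
      have h1 := weight_le_count w
      unfold weight at h1
      rw [h] at h1
      simp only [List.length_reverse, List.length_dropLast] at h1
      omega
  case isFalse h => rfl

lemma weight_concat_replicate (k : ℕ) (x : Letter) :
    weight (List.replicate k Letter.black ++ [x]) = k := by
  unfold weight
  rw [List.dropLast_concat, List.reverse_replicate,
    List.takeWhile_eq_self_iff.mpr ?_]
  · simp
  · intro a ha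
    simp [List.eq_of_mem_replicate ha]

lemma dA_cons_black (w : List Letter) : dA (Letter.black :: w) ↔ dA w := by
  constructor
  · rintro ⟨a, b, hab, hb⟩
    cases a with
    | nil => simp at hab
    | cons z a' =>
      rw [List.cons_append] at hab
      injection hab with h1 h2
      exact ⟨a', b, h2, hb⟩
  · rintro ⟨a, b, hab, hb⟩
    exact ⟨Letter.black :: a, b, by rw [hab]; rfl, hb⟩

lemma dA_cons_of_mem (y : Letter) {w : List Letter} (hm : Letter.black ∈ w) :
    dA (y :: w) ↔ dA w := by
  constructor
  · rintro ⟨a, b, hab, hb⟩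
    cases a with
    | nil =>
      simp only [List.nil_append, List.cons.injEq] at hab
      exact absurd (hab.2 ▸ hm) hb
    | cons z a' =>
      rw [List.cons_append] at hab
      injection hab with h1 h2
      exact ⟨a', b, h2, hb⟩
  · rintro ⟨a, b, hab, hb⟩
    exact ⟨y :: a, b, by rw [hab]; rfl, hb⟩

lemma dec_mem_of_dA {w : List Letter} (h : dA w) : Letter.decorated ∈ w := by
  obtain ⟨a, b, rfl, -⟩ := h
  simp

lemma dA_of_not_black {w : List Letter} (hb : Letter.black ∉ w)
    (hd : Letter.decorated ∈ w) : dA w := by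
  obtain ⟨a, b, rfl⟩ := List.append_of_mem hd
  exact ⟨a, b, rfl, fun h => hb (List.mem_append_right _ (List.mem_cons_of_mem _ h))⟩

lemma dA_replicate_concat (k : ℕ) (x : Letter) :
    dA (List.replicate k Letter.black ++ [x]) ↔ x = Letter.decorated := by
  constructor
  · rintro ⟨a, b, hab, hb⟩
    have hc : k + List.count Letter.black [x] = List.count Letter.black a := by
      have := congrArg (List.count Letter.black) hab
      simpa [List.count_append, List.count_cons, List.count_eq_zero.mpr hb] using this
    have hl : k + 1 = a.length + (b.length + 1) := by
      have := congrArg List.length hab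
      simpa using this
    have hca := List.count_le_length (a := Letter.black) (l := a)
    have hx : List.count Letter.black [x] ≤ 1 := by
      simpa using List.count_le_length (a := Letter.black) (l := [x])
    have hb0 : b = [] := List.length_eq_zero_iff.mp (by omega)
    subst hb0
    obtain ⟨-, h2⟩ := List.append_inj' hab (by simp)
    simpa using h2
  · rintro rfl
    exact ⟨List.replicate k Letter.black, [], rfl, by simp⟩

lemma getLast?_cons_ne (y : Letter) {w : List Letter} (hw : w ≠ []) :
    (y :: w).getLast? = w.getLast? := by
  cases w with
  | nil => exact absurd rfl hw
  | cons z t => simp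

def DD (d p : Bool) (n r : ℕ) : Set (List Letter) :=
  {w | w ∈ B n r ∧ (dA w ↔ d = true) ∧ (Odd (weight w) ↔ p = true)}

lemma DD_finite (d p : Bool) (n r : ℕ) : (DD d p n r).Finite := by
  apply (List.finite_length_eq Letter n).subset
  rintro w ⟨⟨h1, -, -⟩, -, -⟩
  exact h1

lemma DD_cons_black (d p : Bool) {n r : ℕ} (hrn : r + 1 < n) {w : List Letter} :
    Letter.black :: w ∈ DD d p (n + 1) (r + 1) ↔ w ∈ DD d p n r := by
  constructor
  · rintro ⟨⟨hl, hc, hg⟩, hd, hp⟩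
    have hl' : w.length = n := by simpa using hl
    have hc' : w.count Letter.black = r := by
      simp [List.count_cons] at hc; omega
    have hw : w ≠ [] := by
      intro hnil; rw [hnil] at hl'; simp at hl'; omega
    refine ⟨⟨hl', hc', ?_⟩, ?_, ?_⟩
    · rwa [getLast?_cons_ne _ hw] at hg
    · rwa [dA_cons_black] at hd
    · rwa [weight_cons _ hw (Or.inr (by omega))] at hp
  · rintro ⟨⟨hl, hc, hg⟩, hd, hp⟩
    have hw : w ≠ [] := by
      intro hnil; rw [hnil] at hl; simp at hl; omega
    refine ⟨⟨by simpa using hl, by simp [List.count_cons]; omega, ?_⟩, ?_, ?_⟩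
    · rwa [getLast?_cons_ne _ hw]
    · rwa [dA_cons_black]
    · rwa [weight_cons _ hw (Or.inr (by omega))]

lemma DD_cons_nonblack (d p : Bool) (y : Letter) (hy : y ≠ Letter.black)
    {n r : ℕ} (hr : 1 ≤ r) {w : List Letter} :
    y :: w ∈ DD d p (n + 1) r ↔ w ∈ DD d p n r := by
  constructor
  · rintro ⟨⟨hl, hc, hg⟩, hd, hp⟩
    have hl' : w.length = n := by simpa using hl
    have hc' : w.count Letter.black = r := by
      simp [List.count_cons, hy] at hc; omega
    have hm : Letter.black ∈ w := by
      rw [← List.count_pos_iff]; omega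
    have hw : w ≠ [] := by intro hnil; rw [hnil] at hm; simp at hm
    refine ⟨⟨hl', hc', ?_⟩, ?_, ?_⟩
    · rwa [getLast?_cons_ne _ hw] at hg
    · rwa [dA_cons_of_mem _ hm] at hd
    · rwa [weight_cons _ hw (Or.inl hy)] at hp
  · rintro ⟨⟨hl, hc, hg⟩, hd, hp⟩
    have hm : Letter.black ∈ w := by
      rw [← List.count_pos_iff]; omega
    have hw : w ≠ [] := by intro hnil; rw [hnil] at hm; simp at hm
    refine ⟨⟨by simpa using hl, by simp [List.count_cons, hy]; omega, ?_⟩, ?_, ?_⟩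
    · rwa [getLast?_cons_ne _ hw]
    · rwa [dA_cons_of_mem _ hm]
    · rwa [weight_cons _ hw (Or.inl hy)]

lemma DD_cons_eq (d p : Bool) (n r : ℕ) (hr : 1 ≤ r) (hn : r + 1 ≤ n) :
    DD d p (n + 1) r =
      (Letter.black :: ·) '' DD d p n (r - 1) ∪
      (Letter.white :: ·) '' DD d p n r ∪
      (Letter.decorated :: ·) '' DD d p n r := by
  obtain ⟨r', rfl⟩ : ∃ r', r = r' + 1 := ⟨r - 1, by omega⟩
  simp only [Nat.add_sub_cancel]
  ext w
  simp only [Set.mem_union, Set.mem_image]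
  constructor
  · intro hw
    have hl : w.length = n + 1 := hw.1.1
    match w with
    | [] => simp at hl
    | y :: w' =>
      cases y with
      | black =>
        exact Or.inl (Or.inl ⟨w', (DD_cons_black d p (by omega)).mp hw, rfl⟩)
      | white =>
        exact Or.inl (Or.inr ⟨w', (DD_cons_nonblack d p _ (by simp) hr).mp hw, rfl⟩)
      | decorated =>
        exact Or.inr ⟨w', (DD_cons_nonblack d p _ (by simp) hr).mp hw, rfl⟩
  · rintro ((⟨w', hw', rfl⟩ | ⟨w', hw', rfl⟩) | ⟨w', hw', rfl⟩)
    · exact (DD_cons_black d p (by omega)).mpr hw'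
    · exact (DD_cons_nonblack d p _ (by simp) hr).mpr hw'
    · exact (DD_cons_nonblack d p _ (by simp) hr).mpr hw'

lemma cons_injective (y : Letter) : Function.Injective (y :: · : List Letter → List Letter) :=
  fun a b h => by injection h

lemma cons_image_disjoint {y z : Letter} (hyz : y ≠ z) (s t : Set (List Letter)) :
    Disjoint ((y :: ·) '' s) ((z :: ·) '' t) := by
  rw [Set.disjoint_left]
  rintro x ⟨u, -, rfl⟩ ⟨v, -, h⟩
  injection h with h1 _
  exact hyz h1.symm

lemma ncard_DD_cons (d p : Bool) (n r : ℕ) (hr : 1 ≤ r) (hn : r + 1 ≤ n) :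
    (DD d p (n + 1) r).ncard = (DD d p n (r - 1)).ncard + 2 * (DD d p n r).ncard := by
  rw [DD_cons_eq d p n r hr hn]
  rw [Set.ncard_union_eq ?d1 ?f1 ?f2, Set.ncard_union_eq ?d2 ?f3 ?f4]
  case d2 => exact cons_image_disjoint (by simp) _ _
  case d1 =>
    exact Disjoint.union_left (cons_image_disjoint (by simp) _ _)
      (cons_image_disjoint (by simp) _ _)
  case f1 =>
    exact Set.Finite.union ((DD_finite d p n (r - 1)).image _)
      ((DD_finite d p n r).image _)
  case f2 => exact (DD_finite d p n r).image _
  case f3 => exact (DD_finite d p n (r - 1)).image _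
  case f4 => exact (DD_finite d p n r).image _
  rw [Set.ncard_image_of_injective _ (cons_injective _),
    Set.ncard_image_of_injective _ (cons_injective _),
    Set.ncard_image_of_injective _ (cons_injective _)]
  ring

lemma DD_true_zero (n : ℕ) : DD true true n 0 = ∅ := by
  ext w
  simp only [DD, Set.mem_setOf_eq, Set.mem_empty_iff_false, iff_false, not_and]
  rintro ⟨-, hc, -⟩ -
  intro hodd
  have h1 := weight_le_count w
  rw [hc] at h1
  have : weight w = 0 := by omega
  rw [this] at hodd
  simp [Nat.odd_iff] at hodd

lemma DD_false_zero (n : ℕ) :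
    DD false false n 0 = {List.replicate n Letter.white} := by
  ext w
  simp only [DD, Set.mem_setOf_eq, Set.mem_singleton_iff]
  constructor
  · rintro ⟨⟨hl, hc, -⟩, hd, -⟩
    have hb : Letter.black ∉ w := List.count_eq_zero.mp hc
    have hdec : Letter.decorated ∉ w := by
      intro hdm
      exact absurd ((hd.mp (dA_of_not_black hb hdm))) (by simp)
    rw [← hl]
    apply List.eq_replicate_of_mem
    intro b hb'
    cases b with
    | white => rfl
    | black => exact absurd hb' hb
    | decorated => exact absurd hb' hdec
  · rintro rfl
    have hb : Letter.black ∉ List.replicate n Letter.white := by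
      intro h; have := List.eq_of_mem_replicate h; simp at this
    have hdec : Letter.decorated ∉ List.replicate n Letter.white := by
      intro h; have := List.eq_of_mem_replicate h; simp at this
    refine ⟨⟨by simp, List.count_eq_zero.mpr hb, ?_⟩, ?_, ?_⟩
    · intro hg
      cases n with
      | zero => simp at hg
      | succ m =>
        have hx := List.mem_of_getLast? hg
        exact hb hx
    · constructor
      · intro hdA; exact absurd (dec_mem_of_dA hdA) hdec
      · simp
    · constructor
      · intro hodd
        have h1 := weight_le_count (List.replicate n Letter.white)
        rw [List.count_eq_zero.mpr hb] at h1
        have : weight (List.replicate n Letter.white) = 0 := by omega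
        rw [this] at hodd
        exact absurd hodd (by simp)
      · simp

lemma DD_top (d p : Bool) (n : ℕ) (hp : Odd n ↔ p = true) :
    DD d p (n + 1) n =
      {List.replicate n Letter.black ++
        [if d then Letter.decorated else Letter.white]} := by
  ext w
  simp only [DD, Set.mem_setOf_eq, Set.mem_singleton_iff]
  constructor
  · rintro ⟨⟨hl, hc, hg⟩, hd, -⟩
    have hw : w ≠ [] := by intro h; rw [h] at hl; simp at hl
    obtain ⟨l, x, rfl⟩ : ∃ l x, w = l ++ [x] :=
      ⟨w.dropLast, w.getLast hw, (List.dropLast_concat_getLast hw).symm⟩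
    have hll : l.length = n := by simpa using hl
    have hxb : x ≠ Letter.black := by
      intro hxe
      exact hg (by rw [List.getLast?_concat, hxe])
    have hcl : List.count Letter.black l = n := by
      rw [List.count_append] at hc
      simpa [List.count_singleton, hxb] using hc
    have hlrep : l = List.replicate n Letter.black := by
      apply List.eq_replicate_iff.mpr
      refine ⟨hll, fun b hb => ?_⟩
      have := List.count_eq_length.mp (by omega : List.count Letter.black l = l.length)
      exact (this b hb).symm
    subst hlrep
    have hxd : x = Letter.decorated ↔ d = true := by
      rw [← dA_replicate_concat n x]; exact hd
    cases d <;> cases x <;> simp_all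
  · rintro rfl
    set c := if d then Letter.decorated else Letter.white with hcdef
    have hcb : c ≠ Letter.black := by cases d <;> simp [hcdef]
    refine ⟨⟨by simp, ?_, ?_⟩, ?_, ?_⟩
    · simp [List.count_append, List.count_singleton, hcb]
    · rw [List.getLast?_concat]
      simp [hcb]
    · rw [dA_replicate_concat]
      cases d <;> simp [hcdef]
    · rw [weight_concat_replicate]
      exact hp

lemma DD_top_empty (d p : Bool) (n : ℕ) (hp : ¬(Odd n ↔ p = true)) :
    DD d p (n + 1) n = ∅ := by
  ext w
  simp only [DD, Set.mem_setOf_eq, Set.mem_empty_iff_false, iff_false, not_and]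
  rintro ⟨hl, hc, hg⟩ -
  intro hpar
  apply hp
  have hw : w ≠ [] := by intro h; rw [h] at hl; simp at hl
  obtain ⟨l, x, rfl⟩ : ∃ l x, w = l ++ [x] :=
    ⟨w.dropLast, w.getLast hw, (List.dropLast_concat_getLast hw).symm⟩
  have hll : l.length = n := by simpa using hl
  have hxb : x ≠ Letter.black := by
    intro hxe
    exact hg (by rw [List.getLast?_concat, hxe])
  have hcl : List.count Letter.black l = n := by
    rw [List.count_append] at hc
    simpa [List.count_singleton, hxb] using hc
  have hlrep : l = List.replicate n Letter.black := by
    apply List.eq_replicate_iff.mpr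
    refine ⟨hll, fun b hb => ?_⟩
    have := List.count_eq_length.mp (by omega : List.count Letter.black l = l.length)
    exact (this b hb).symm
  subst hlrep
  rwa [weight_concat_replicate] at hpar

lemma key_identity : ∀ N R : ℕ, R + 1 ≤ N →
    ((DD true true N R).ncard : ℤ) =
      (DD false false N R).ncard + (-1) ^ (R + 1) := by
  intro N
  induction N with
  | zero => intro R hR; exact absurd hR (by omega)
  | succ N ih =>
    intro R hR
    rcases Nat.eq_zero_or_pos R with rfl | hR1
    · rw [DD_true_zero, DD_false_zero]
      simp
    · rcases eq_or_lt_of_le hR with htop | hlt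
      · have hRN : R = N := by omega
        subst hRN
        by_cases hodd : Odd R
        · rw [DD_top true true R (by simp [hodd]),
              DD_top_empty false false R (by simp [hodd])]
          rw [Set.ncard_singleton, Set.ncard_empty, Even.neg_one_pow hodd.add_one]
          norm_num
        · rw [DD_top_empty true true R (by simp [hodd]),
              DD_top false false R (by simp [hodd])]
          rw [Set.ncard_singleton, Set.ncard_empty,
            Odd.neg_one_pow (Even.add_one (Nat.not_odd_iff_even.mp hodd))]
          norm_num
      · obtain ⟨R', rfl⟩ : ∃ R', R = R' + 1 := ⟨R - 1, by omega⟩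
        have h1 := ih R' (by omega)
        have h2 := ih (R' + 1) (by omega)
        rw [ncard_DD_cons true true N (R' + 1) (by omega) (by omega),
            ncard_DD_cons false false N (R' + 1) (by omega) (by omega)]
        simp only [Nat.add_sub_cancel]
        push_cast
        linear_combination h1 + 2 * h2

theorem conjugation (n r : ℕ) (h : r + 1 ≤ n) :
    ({w ∈ Bplus n r | Odd (weight w)}.ncard : ℤ) =
      ({w ∈ Bminus n r | Even (weight w)}.ncard : ℤ) + (-1) ^ (r + 1) := by
  have eA : {w ∈ Bplus n r | Odd (weight w)} = DD true true n r := by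
    ext w
    constructor
    · rintro ⟨⟨hB, hdA⟩, hodd⟩
      exact ⟨hB, iff_of_true hdA rfl, iff_of_true hodd rfl⟩
    · rintro ⟨hB, hdA, hodd⟩
      exact ⟨⟨hB, hdA.mpr rfl⟩, hodd.mpr rfl⟩
  have eC : {w ∈ Bminus n r | Even (weight w)} = DD false false n r := by
    ext w
    constructor
    · rintro ⟨⟨hB, hnp⟩, hev⟩
      refine ⟨hB, iff_of_false (fun hdA => hnp ⟨hB, hdA⟩) (by simp),
        iff_of_false ?_ (by simp)⟩
      exact Nat.not_odd_iff_even.mpr hev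
    · rintro ⟨hB, hdA, hodd⟩
      refine ⟨⟨hB, fun hp => ?_⟩, ?_⟩
      · exact absurd (hdA.mp hp.2) (by simp)
      · exact Nat.not_odd_iff_even.mp (fun ho => absurd (hodd.mp ho) (by simp))
  rw [eA, eC]
  exact key_identity n r h
end

section
/- For all integers n, r, k with 0 ≤ 2k ≤ r ≤ n−1 and n ≥ 2, the number of arrangements in B(n,r) of weight exactly 2k equals 2^{n−r} · C(n−2−2k, r−2k). -/
namespace CWAux

open Letter List

instance : Fintype Letter :=
  ⟨{Letter.white, Letter.black, Letter.decorated}, by intro x; cases x <;> simp⟩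

def A (m s : ℕ) : Set (List Letter) :=
  {w | w.length = m ∧ w.count Letter.black = s}

lemma finA (m s : ℕ) : (A m s).Finite :=
  (List.finite_length_eq Letter m).subset fun w hw => hw.1

lemma finB (m s : ℕ) : (B m s).Finite :=
  (List.finite_length_eq Letter m).subset fun w hw => hw.1

lemma countA (m : ℕ) : ∀ s, (A m s).ncard = Nat.choose m s * 2 ^ (m - s) := by
  induction m with
  | zero =>
    intro s
    cases s with
    | zero =>
      have : A 0 0 = {[]} := by
        ext w; simp only [A, Set.mem_setOf_eq, List.length_eq_zero_iff, Set.mem_singleton_iff]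
        constructor
        · rintro ⟨rfl, -⟩; rfl
        · rintro rfl; simp
      rw [this]; simp
    | succ t =>
      have : A 0 (t+1) = ∅ := by
        ext w
        simp only [A, Set.mem_setOf_eq, List.length_eq_zero_iff, Set.mem_empty_iff_false, iff_false,
          not_and]
        rintro rfl; simp
      rw [this]; simp
  | succ m ih =>
    intro s
    cases s with
    | zero =>
      have hset : A (m+1) 0 =
          (Letter.white :: ·) '' A m 0 ∪ (Letter.decorated :: ·) '' A m 0 := by
        ext w
        constructor
        · rintro ⟨hl, hc⟩
          cases w with
          | nil => simp at hl
          | cons a t =>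
            simp only [List.length_cons, Nat.add_right_cancel_iff] at hl
            cases a with
            | black => simp [List.count_cons] at hc
            | white =>
              left; exact ⟨t, ⟨hl, by simpa [List.count_cons] using hc⟩, rfl⟩
            | decorated =>
              right; exact ⟨t, ⟨hl, by simpa [List.count_cons] using hc⟩, rfl⟩
        · rintro (⟨t, ⟨hl, hc⟩, rfl⟩ | ⟨t, ⟨hl, hc⟩, rfl⟩) <;>
            exact ⟨by simp [hl], by simp [List.count_cons, hc]⟩
      have hdisj : Disjoint ((Letter.white :: ·) '' A m 0) ((Letter.decorated :: ·) '' A m 0) := by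
        rw [Set.disjoint_left]
        rintro w ⟨t, _, rfl⟩ ⟨t', _, h⟩
        simp at h
      rw [hset, Set.ncard_union_eq hdisj ((finA m 0).image _) ((finA m 0).image _),
        Set.ncard_image_of_injective _ (List.cons_injective),
        Set.ncard_image_of_injective _ (List.cons_injective), ih]
      simp only [Nat.choose_zero_right, Nat.sub_zero, one_mul, pow_succ]
      ring
    | succ t =>
      have hset : A (m+1) (t+1) =
          ((Letter.white :: ·) '' A m (t+1) ∪ (Letter.decorated :: ·) '' A m (t+1)) ∪
            (Letter.black :: ·) '' A m t := by
        ext w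
        constructor
        · rintro ⟨hl, hc⟩
          cases w with
          | nil => simp at hl
          | cons a tl =>
            simp only [List.length_cons, Nat.add_right_cancel_iff] at hl
            cases a with
            | black =>
              right; exact ⟨tl, ⟨hl, by simpa [List.count_cons] using hc⟩, rfl⟩
            | white =>
              left; left; exact ⟨tl, ⟨hl, by simpa [List.count_cons] using hc⟩, rfl⟩
            | decorated =>
              left; right; exact ⟨tl, ⟨hl, by simpa [List.count_cons] using hc⟩, rfl⟩
        · rintro ((⟨tl, ⟨hl, hc⟩, rfl⟩ | ⟨tl, ⟨hl, hc⟩, rfl⟩) | ⟨tl, ⟨hl, hc⟩, rfl⟩) <;>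
            exact ⟨by simp [hl], by simp [List.count_cons, hc]⟩
      have hd1 : Disjoint ((Letter.white :: ·) '' A m (t+1)) ((Letter.decorated :: ·) '' A m (t+1)) := by
        rw [Set.disjoint_left]
        rintro w ⟨tl, _, rfl⟩ ⟨tl', _, h⟩
        simp at h
      have hd2 : Disjoint
          ((Letter.white :: ·) '' A m (t+1) ∪ (Letter.decorated :: ·) '' A m (t+1))
          ((Letter.black :: ·) '' A m t) := by
        rw [Set.disjoint_left]
        rintro w (⟨tl, _, rfl⟩ | ⟨tl, _, rfl⟩) ⟨tl', _, h⟩ <;> simp at h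
      rw [hset,
        Set.ncard_union_eq hd2 (((finA _ _).image _).union ((finA _ _).image _))
          ((finA _ _).image _),
        Set.ncard_union_eq hd1 ((finA _ _).image _) ((finA _ _).image _),
        Set.ncard_image_of_injective _ (List.cons_injective),
        Set.ncard_image_of_injective _ (List.cons_injective),
        Set.ncard_image_of_injective _ (List.cons_injective), ih, ih]
      rw [Nat.choose_succ_succ']
      rcases le_or_gt (t+1) m with h | h
      · have hh1 : m - t = (m - (t+1)) + 1 := by omega
        have hh2 : m + 1 - (t + 1) = m - t := by omega
        rw [hh2, hh1, pow_succ]; ring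
      · have hz : Nat.choose m (t+1) = 0 := Nat.choose_eq_zero_of_lt h
        have hh2 : m + 1 - (t + 1) = m - t := by omega
        rw [hz, hh2]; ring

lemma countB (m s : ℕ) : (B m s).ncard = 2 ^ (m - s) * Nat.choose (m - 1) s := by
  cases m with
  | zero =>
    cases s with
    | zero =>
      have : B 0 0 = {[]} := by
        ext w
        simp only [B, Set.mem_setOf_eq, List.length_eq_zero_iff, Set.mem_singleton_iff]
        constructor
        · rintro ⟨rfl, -⟩; rfl
        · rintro rfl; simp
      rw [this]; simp
    | succ t =>
      have : B 0 (t+1) = ∅ := by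
        ext w
        simp only [B, Set.mem_setOf_eq, Set.mem_empty_iff_false, iff_false, not_and,
          List.length_eq_zero_iff]
        rintro rfl; simp
      rw [this]; simp
  | succ m =>
    have hset : B (m+1) s = (· ++ [Letter.white]) '' A m s ∪ (· ++ [Letter.decorated]) '' A m s := by
      ext w
      constructor
      · rintro ⟨hl, hc, hlast⟩
        have hne : w ≠ [] := by rintro rfl; simp at hl
        have hw : w.dropLast ++ [w.getLast hne] = w := List.dropLast_append_getLast hne
        have hlast' : w.getLast? = some (w.getLast hne) := List.getLast?_eq_getLast hne
        have hcne : w.getLast hne ≠ Letter.black := by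
          intro h; rw [h] at hlast'; exact hlast hlast'
        have hld : w.dropLast.length = m := by
          simp [List.length_dropLast, hl]
        have hcd : w.dropLast.count Letter.black = s := by
          have := congrArg (List.count Letter.black) hw
          rw [hc] at this
          simp [List.count_append, List.count_singleton', hcne] at this
          omega
        cases hcase : w.getLast hne with
        | black => exact absurd hcase hcne
        | white =>
          left; refine ⟨w.dropLast, ⟨hld, hcd⟩, ?_⟩
          rw [← hcase]; exact hw
        | decorated =>
          right; refine ⟨w.dropLast, ⟨hld, hcd⟩, ?_⟩
          rw [← hcase]; exact hw
      · rintro (⟨t, ⟨hl, hc⟩, rfl⟩ | ⟨t, ⟨hl, hc⟩, rfl⟩) <;>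
          exact ⟨by simp [hl], by simp [List.count_append, List.count_singleton', hc],
            by simp [List.getLast?_concat]⟩
    have hdisj : Disjoint ((· ++ [Letter.white]) '' A m s) ((· ++ [Letter.decorated]) '' A m s) := by
      rw [Set.disjoint_left]
      rintro w ⟨t, _, rfl⟩ ⟨t', _, h⟩
      have := congrArg List.getLast? h
      simp [List.getLast?_concat] at this
    rw [hset, Set.ncard_union_eq hdisj ((finA _ _).image _) ((finA _ _).image _),
      Set.ncard_image_of_injective _ (List.append_left_injective _),
      Set.ncard_image_of_injective _ (List.append_left_injective _), countA]
    rcases le_or_gt s m with h | h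
    · have h1 : m + 1 - s = (m - s) + 1 := by omega
      rw [h1, pow_succ]
      simp only [Nat.succ_sub_one]
      ring
    · have hz : Nat.choose m s = 0 := Nat.choose_eq_zero_of_lt h
      simp [Nat.succ_sub_one, hz]

lemma takeWhile_rep (t : ℕ) (l : List Letter) (hl : l.head? ≠ some Letter.black) :
    (List.replicate t Letter.black ++ l).takeWhile (· = Letter.black)
      = List.replicate t Letter.black := by
  induction t with
  | zero =>
    cases l with
    | nil => simp
    | cons a l =>
      have : a ≠ Letter.black := by simpa using hl
      simp [List.takeWhile_cons, this]
  | succ t ih => simp [List.replicate_succ, List.takeWhile_cons, ih]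

end CWAux

theorem card_weight_eq (n r k : ℕ) (h1 : 2 * k ≤ r) (h2 : r + 1 ≤ n) (h3 : 2 ≤ n) :
    {w ∈ B n r | weight w = 2 * k}.ncard = 2 ^ (n - r) * (n - 2 - 2 * k).choose (r - 2 * k) := by
  classical
  open CWAux Letter List in
  set m := n - 1 - 2 * k with hm
  set s := r - 2 * k with hs
  have hkn : 2 * k + 1 ≤ n := by omega
  have hset : {w ∈ B n r | weight w = 2 * k} =
      (· ++ (List.replicate (2*k) Letter.black ++ [Letter.white])) '' B m s ∪
      (· ++ (List.replicate (2*k) Letter.black ++ [Letter.decorated])) '' B m s := by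
    ext w
    constructor
    · rintro ⟨⟨hl, hc, hlast⟩, hwt⟩
      have hne : w ≠ [] := by rintro rfl; simp at hl; omega
      have hw : w.dropLast ++ [w.getLast hne] = w := List.dropLast_append_getLast hne
      have hlast' : w.getLast? = some (w.getLast hne) := List.getLast?_eq_getLast hne
      have hcne : w.getLast hne ≠ Letter.black := by
        intro h; rw [h] at hlast'; exact hlast hlast'
      set rv := w.dropLast.reverse with hrv
      have hsplit : rv.takeWhile (· = Letter.black) ++ rv.dropWhile (· = Letter.black) = rv :=
        List.takeWhile_append_dropWhile
      have htk : rv.takeWhile (· = Letter.black) = List.replicate (2*k) Letter.black := by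
        rw [List.eq_replicate_iff]
        refine ⟨hwt, fun b hb => ?_⟩
        have := List.mem_takeWhile_imp hb
        simpa using this
      set u : List Letter := (rv.dropWhile (· = Letter.black)).reverse with hu
      have hrv2 : rv = List.replicate (2*k) Letter.black ++ rv.dropWhile (· = Letter.black) := by
        rw [← htk]; exact hsplit.symm
      have hd : w.dropLast = u ++ List.replicate (2*k) Letter.black := by
        have h1 : w.dropLast = rv.reverse := by rw [hrv, List.reverse_reverse]
        rw [h1, hrv2, List.reverse_append, List.reverse_replicate]
      have hwu : w = u ++ (List.replicate (2*k) Letter.black ++ [w.getLast hne]) := by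
        rw [← List.append_assoc, ← hd]; exact hw.symm
      have hulast : u.getLast? ≠ some Letter.black := by
        rw [hu, List.getLast?_reverse]
        cases hdw : rv.dropWhile (· = Letter.black) with
        | nil => simp
        | cons a tl =>
          have h0 : 0 < (rv.dropWhile (· = Letter.black)).length := by rw [hdw]; simp
          have hnp := List.dropWhile_get_zero_not (· = Letter.black) rv h0
          rw [List.get_mk_zero] at hnp
          simp only [hdw, List.head?_cons, Ne, Option.some_inj]
          simp only [hdw, List.head_cons] at hnp
          intro h
          exact hnp (by simp [h])
      have hulen : u.length = m := by
        have := congrArg List.length hwu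
        rw [hl] at this
        simp at this
        omega
      have hucount : u.count Letter.black = s := by
        have := congrArg (List.count Letter.black) hwu
        rw [hc] at this
        simp [List.count_append, List.count_singleton', List.count_replicate, hcne] at this
        omega
      cases hcase : w.getLast hne with
      | black => exact absurd hcase hcne
      | white =>
        left; refine ⟨u, ⟨hulen, hucount, hulast⟩, ?_⟩
        rw [← hcase]; exact hwu.symm
      | decorated =>
        right; refine ⟨u, ⟨hulen, hucount, hulast⟩, ?_⟩
        rw [← hcase]; exact hwu.symm
    · rintro (⟨u, ⟨hl, hc, hlast⟩, rfl⟩ | ⟨u, ⟨hl, hc, hlast⟩, rfl⟩) <;>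
      · refine ⟨⟨?_, ?_, ?_⟩, ?_⟩
        · simp only [List.length_append, List.length_replicate, List.length_cons,
            List.length_nil, hl]
          omega
        · simp only [List.count_append, List.count_replicate, List.count_singleton', hc]
          simp
          omega
        · beta_reduce
          rw [← List.append_assoc, List.getLast?_concat]; simp
        · show weight _ = 2 * k
          unfold weight
          beta_reduce
          rw [← List.append_assoc, List.dropLast_concat, List.reverse_append,
            List.reverse_replicate, CWAux.takeWhile_rep]
          · simp
          · rw [List.head?_reverse]; exact hlast
  have hdisj : Disjoint
      ((· ++ (List.replicate (2*k) Letter.black ++ [Letter.white])) '' B m s)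
      ((· ++ (List.replicate (2*k) Letter.black ++ [Letter.decorated])) '' B m s) := by
    rw [Set.disjoint_left]
    rintro w ⟨t, _, rfl⟩ ⟨t', _, h⟩
    have := congrArg List.getLast? h
    simp only at this
    rw [← List.append_assoc, ← List.append_assoc, List.getLast?_concat,
      List.getLast?_concat] at this
    simp at this
  rw [hset, Set.ncard_union_eq hdisj ((CWAux.finB _ _).image _) ((CWAux.finB _ _).image _),
    Set.ncard_image_of_injective _ (List.append_left_injective _),
    Set.ncard_image_of_injective _ (List.append_left_injective _), CWAux.countB]
  have hms : m - s = n - 1 - r := by omega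
  have hm1 : m - 1 = n - 2 - 2 * k := by omega
  have hnr : n - r = (n - 1 - r) + 1 := by omega
  rw [hms, hm1, hnr, pow_succ]
  ring
end
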